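/- Let M_{n,d} denote the set of n×n symmetric zero-diagonal matrices over F_{2^d} that are full rank over F_2. Then |M_{n,d}| ≥ ν(n,d), where ν(n,d) = q^{C(n,2)} ∏_{j=1}^{⌈(n−1)/2⌉}(1 − q^{1−2j}) if n is even, and ν(n,d) = (q^{n−1} − 2^{n−1}) q^{C(n−1,2)} ∏_{j=1}^{⌈(n−2)/2⌉}(1 − q^{1−2j}) if n is odd, with q = 2^d. -/

import Mathlib

open Matrix
open Classical in
noncomputable def piv {F : Type} [Field F] {r : ℕ} (v : Fin (r+1) → F) : Fin (r+1) :=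
  if h : ∃ j, v j ≠ 0 then h.choose else 0

open Classical in
lemma piv_spec {F : Type} [Field F] {r : ℕ} {v : Fin (r+1) → F} (hv : v ≠ 0) :
    v (piv v) ≠ 0 := by
  have h : ∃ j, v j ≠ 0 := Function.ne_iff.mp hv
  rw [piv, dif_pos h]
  exact h.choose_spec

noncomputable def sigmaEquiv {m : ℕ} (k : Fin (2*m+1)) : (Fin (2*m) ⊕ Fin 2) ≃ Fin (2*m+2) :=
  Equiv.ofBijective (Sum.elim (fun i => (k.succAbove i).castSucc) ![Fin.castSucc k, Fin.last (2*m+1)])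
  (by
    rw [Fintype.bijective_iff_injective_and_card]
    constructor
    · intro x y h
      cases x with
      | inl i => cases y with
        | inl j =>
          simp only [Sum.elim_inl, Fin.castSucc_inj] at h
          exact congrArg Sum.inl (k.succAbove_right_injective h)
        | inr t =>
          exfalso
          fin_cases t <;> simp only [Sum.elim_inl, Sum.elim_inr] at h
          · exact k.succAbove_ne i (Fin.castSucc_injective _ h)
          · exact absurd h (Fin.ne_last_of_lt (Fin.castSucc_lt_last _))
      | inr t => cases y with
        | inl j =>
          exfalso
          fin_cases t <;> simp only [Sum.elim_inl, Sum.elim_inr] at h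
          · exact k.succAbove_ne j (Fin.castSucc_injective _ h.symm)
          · exact absurd h.symm (Fin.ne_last_of_lt (Fin.castSucc_lt_last _))
        | inr s =>
          fin_cases t <;> fin_cases s <;> simp_all
          · exact absurd h.symm (Fin.ne_last_of_lt (Fin.castSucc_lt_last _))
    · simp )

lemma sigmaEquiv_inl {m : ℕ} (k : Fin (2*m+1)) (i : Fin (2*m)) :
    sigmaEquiv k (Sum.inl i) = (k.succAbove i).castSucc := rfl
lemma sigmaEquiv_inr0 {m : ℕ} (k : Fin (2*m+1)) :
    sigmaEquiv k (Sum.inr 0) = k.castSucc := rfl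
lemma sigmaEquiv_inr1 {m : ℕ} (k : Fin (2*m+1)) :
    sigmaEquiv k (Sum.inr 1) = Fin.last (2*m+1) := rfl

section Core
variable {F : Type} [Field F]

def Jmat (c : F) : Matrix (Fin 2) (Fin 2) F := !![0, c; c, 0]

lemma Jmat_transpose (c : F) : (Jmat c)ᵀ = Jmat c := by
  ext i j; fin_cases i <;> fin_cases j <;> simp [Jmat]

lemma Jmat_det (c : F) : (Jmat c).det = -(c*c) := by
  simp [Jmat, Matrix.det_fin_two_of]

noncomputable def Pmat (m : ℕ) (v : Fin (2*m+1) → F) (w : Fin (2*m) → F) :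
    Matrix (Fin (2*m)) (Fin 2) F :=
  Matrix.of fun i => ![v ((piv v).succAbove i) * (v (piv v))⁻¹, w i * (v (piv v))⁻¹]

noncomputable def coreMat (m : ℕ) (v : Fin (2*m+1) → F) (w : Fin (2*m) → F)
    (B : Matrix (Fin (2*m)) (Fin (2*m)) F) :
    Matrix (Fin (2*m) ⊕ Fin 2) (Fin (2*m) ⊕ Fin 2) F :=
  fromBlocks (B + Pmat m v w * Jmat (v (piv v)) * (Pmat m v w)ᵀ)
    (Pmat m v w * Jmat (v (piv v))) (Pmat m v w * Jmat (v (piv v)))ᵀ (Jmat (v (piv v)))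

lemma coreMat_eq (m : ℕ) (v : Fin (2*m+1) → F) (w : Fin (2*m) → F)
    (B : Matrix (Fin (2*m)) (Fin (2*m)) F) :
    coreMat m v w B =
      fromBlocks 1 (Pmat m v w) 0 1 * fromBlocks B 0 0 (Jmat (v (piv v))) *
        (fromBlocks 1 (Pmat m v w) 0 1)ᵀ := by
  rw [Matrix.fromBlocks_transpose, Matrix.fromBlocks_multiply, Matrix.fromBlocks_multiply]
  simp [coreMat, Matrix.transpose_mul, Jmat_transpose, Matrix.mul_assoc]

lemma coreMat_isUnit {m : ℕ} {v : Fin (2*m+1) → F} (w : Fin (2*m) → F)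
    {B : Matrix (Fin (2*m)) (Fin (2*m)) F} (hv : v ≠ 0) (hB : IsUnit B) :
    IsUnit (coreMat m v w B) := by
  rw [coreMat_eq]
  have h1 : IsUnit ((fromBlocks 1 (Pmat m v w) 0 1 :
      Matrix (Fin (2*m) ⊕ Fin 2) (Fin (2*m) ⊕ Fin 2) F)) := by
    rw [Matrix.isUnit_iff_isUnit_det, Matrix.det_fromBlocks_zero₂₁]
    simp
  have hc := piv_spec hv
  have hBd : B.det ≠ 0 := isUnit_iff_ne_zero.mp ((Matrix.isUnit_iff_isUnit_det _).mp hB)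
  have h2 : IsUnit (fromBlocks B 0 0 (Jmat (v (piv v)))) := by
    rw [Matrix.isUnit_iff_isUnit_det, Matrix.det_fromBlocks_zero₂₁, Jmat_det,
      isUnit_iff_ne_zero]
    intro h
    rcases mul_eq_zero.mp h with h' | h'
    · exact hBd h'
    · rcases mul_eq_zero.mp (neg_eq_zero.mp h') with h'' | h'' <;> exact hc h''
  have h3 : IsUnit ((fromBlocks 1 (Pmat m v w) 0 1 :
      Matrix (Fin (2*m) ⊕ Fin 2) (Fin (2*m) ⊕ Fin 2) F)ᵀ) := by
    rw [Matrix.isUnit_iff_isUnit_det, Matrix.det_transpose, Matrix.det_fromBlocks_zero₂₁]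
    simp
  exact (h1.mul h2).mul h3

lemma coreMat_isSymm {m : ℕ} (v : Fin (2*m+1) → F) (w : Fin (2*m) → F)
    {B : Matrix (Fin (2*m)) (Fin (2*m)) F} (hB : B.IsSymm) :
    (coreMat m v w B).IsSymm := by
  unfold Matrix.IsSymm
  simp only [coreMat, Matrix.fromBlocks_transpose, Matrix.transpose_add, Matrix.transpose_mul,
    Matrix.transpose_transpose, Jmat_transpose, hB.eq, Matrix.mul_assoc]

lemma coreMat_diag {m : ℕ} (h2 : (2:F) = 0) (v : Fin (2*m+1) → F) (w : Fin (2*m) → F)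
    {B : Matrix (Fin (2*m)) (Fin (2*m)) F} (hB : ∀ i, B i i = 0) :
    ∀ x, coreMat m v w B x x = 0 := by
  intro x
  cases x with
  | inl i =>
    show (B + Pmat m v w * Jmat (v (piv v)) * (Pmat m v w)ᵀ) i i = 0
    simp only [Matrix.add_apply, Matrix.mul_apply, Fin.sum_univ_two, Matrix.transpose_apply,
      Jmat, Pmat, Matrix.of_apply, Matrix.cons_val', Matrix.cons_val_zero, Matrix.cons_val_one,
      Matrix.head_cons, Matrix.empty_val', Matrix.cons_val_fin_one, Matrix.head_fin_const]
    rw [hB i]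
    ring_nf
    rw [h2, mul_zero]
  | inr t =>
    fin_cases t <;> simp [coreMat, Jmat]

lemma coreMat_entry_lastk {m : ℕ} (v : Fin (2*m+1) → F) (w : Fin (2*m) → F)
    (B : Matrix (Fin (2*m)) (Fin (2*m)) F) :
    coreMat m v w B (Sum.inr 1) (Sum.inr 0) = v (piv v) := by
  simp [coreMat, Jmat]

lemma coreMat_entry_last_inl {m : ℕ} {v : Fin (2*m+1) → F} (w : Fin (2*m) → F)
    (B : Matrix (Fin (2*m)) (Fin (2*m)) F) (hv : v ≠ 0) (i : Fin (2*m)) :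
    coreMat m v w B (Sum.inr 1) (Sum.inl i) = v ((piv v).succAbove i) := by
  have hc := piv_spec hv
  simp only [coreMat, Matrix.fromBlocks_apply₂₁, Matrix.transpose_apply, Matrix.mul_apply,
    Fin.sum_univ_two, Jmat, Pmat, Matrix.of_apply, Matrix.cons_val', Matrix.cons_val_zero,
    Matrix.cons_val_one, Matrix.head_cons, Matrix.empty_val', Matrix.cons_val_fin_one,
    Matrix.head_fin_const]
  field_simp
  simp

lemma coreMat_entry_k_inl {m : ℕ} {v : Fin (2*m+1) → F} (w : Fin (2*m) → F)
    (B : Matrix (Fin (2*m)) (Fin (2*m)) F) (hv : v ≠ 0) (i : Fin (2*m)) :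
    coreMat m v w B (Sum.inr 0) (Sum.inl i) = w i := by
  have hc := piv_spec hv
  simp only [coreMat, Matrix.fromBlocks_apply₂₁, Matrix.transpose_apply, Matrix.mul_apply,
    Fin.sum_univ_two, Jmat, Pmat, Matrix.of_apply, Matrix.cons_val', Matrix.cons_val_zero,
    Matrix.cons_val_one, Matrix.head_cons, Matrix.empty_val', Matrix.cons_val_fin_one,
    Matrix.head_fin_const]
  field_simp
  simp

lemma coreMat_entry_inl_inl {m : ℕ} (v : Fin (2*m+1) → F) (w : Fin (2*m) → F)
    (B : Matrix (Fin (2*m)) (Fin (2*m)) F) (i j : Fin (2*m)) :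
    coreMat m v w B (Sum.inl i) (Sum.inl j) =
      B i j + (Pmat m v w * Jmat (v (piv v)) * (Pmat m v w)ᵀ) i j := rfl

end Core

section Step
variable {F : Type} [Field F]

noncomputable def stepMat (m : ℕ) (v : Fin (2*m+1) → F) (w : Fin (2*m) → F)
    (B : Matrix (Fin (2*m)) (Fin (2*m)) F) : Matrix (Fin (2*m+2)) (Fin (2*m+2)) F :=
  (Matrix.reindex (sigmaEquiv (piv v)) (sigmaEquiv (piv v))) (coreMat m v w B)

lemma stepMat_apply (m : ℕ) (v : Fin (2*m+1) → F) (w : Fin (2*m) → F)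
    (B : Matrix (Fin (2*m)) (Fin (2*m)) F) (s t : Fin (2*m) ⊕ Fin 2) :
    stepMat m v w B (sigmaEquiv (piv v) s) (sigmaEquiv (piv v) t) = coreMat m v w B s t := by
  simp [stepMat, Matrix.reindex_apply, Matrix.submatrix_apply]

lemma stepMat_isSymm {m : ℕ} (v : Fin (2*m+1) → F) (w : Fin (2*m) → F)
    {B : Matrix (Fin (2*m)) (Fin (2*m)) F} (hB : B.IsSymm) :
    (stepMat m v w B).IsSymm := by
  unfold Matrix.IsSymm stepMat
  rw [Matrix.reindex_apply, Matrix.transpose_submatrix, (coreMat_isSymm v w hB).eq]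

lemma stepMat_diag {m : ℕ} (h2 : (2:F) = 0) (v : Fin (2*m+1) → F) (w : Fin (2*m) → F)
    {B : Matrix (Fin (2*m)) (Fin (2*m)) F} (hB : ∀ i, B i i = 0) :
    ∀ x, stepMat m v w B x x = 0 := by
  intro x
  rw [stepMat, Matrix.reindex_apply, Matrix.submatrix_apply]
  exact coreMat_diag h2 v w hB _

lemma stepMat_isUnit {m : ℕ} {v : Fin (2*m+1) → F} (w : Fin (2*m) → F)
    {B : Matrix (Fin (2*m)) (Fin (2*m)) F} (hv : v ≠ 0) (hB : IsUnit B) :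
    IsUnit (stepMat m v w B) := by
  rw [Matrix.isUnit_iff_isUnit_det, stepMat, Matrix.det_reindex_self,
    ← Matrix.isUnit_iff_isUnit_det]
  exact coreMat_isUnit w hv hB

lemma stepMat_row_last {m : ℕ} {v : Fin (2*m+1) → F} (w : Fin (2*m) → F)
    (B : Matrix (Fin (2*m)) (Fin (2*m)) F) (hv : v ≠ 0) (j : Fin (2*m+1)) :
    stepMat m v w B (Fin.last (2*m+1)) j.castSucc = v j := by
  by_cases hj : j = piv v
  · subst hj
    rw [← sigmaEquiv_inr1 (piv v), ← sigmaEquiv_inr0 (piv v), stepMat_apply]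
    exact coreMat_entry_lastk v w B
  · obtain ⟨i, hi⟩ := Fin.exists_succAbove_eq hj
    rw [← hi, ← sigmaEquiv_inr1 (piv v), ← sigmaEquiv_inl (piv v) i, stepMat_apply]
    rw [coreMat_entry_last_inl w B hv, hi]

lemma stepMat_row_k {m : ℕ} {v : Fin (2*m+1) → F} (w : Fin (2*m) → F)
    (B : Matrix (Fin (2*m)) (Fin (2*m)) F) (hv : v ≠ 0) (i : Fin (2*m)) :
    stepMat m v w B ((piv v).castSucc) ((piv v).succAbove i).castSucc = w i := by
  rw [← sigmaEquiv_inr0 (piv v), ← sigmaEquiv_inl (piv v) i, stepMat_apply]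
  exact coreMat_entry_k_inl w B hv i

lemma stepMat_block {m : ℕ} (v : Fin (2*m+1) → F) (w : Fin (2*m) → F)
    (B : Matrix (Fin (2*m)) (Fin (2*m)) F) (i j : Fin (2*m)) :
    stepMat m v w B ((piv v).succAbove i).castSucc ((piv v).succAbove j).castSucc =
      B i j + (Pmat m v w * Jmat (v (piv v)) * (Pmat m v w)ᵀ) i j := by
  rw [← sigmaEquiv_inl (piv v) i, ← sigmaEquiv_inl (piv v) j, stepMat_apply]
  rfl

end Step

section Count
variable (F : Type) [Field F] [Fintype F]

def GoodU (n : ℕ) : Type :=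
  {M : Matrix (Fin n) (Fin n) F // M.IsSymm ∧ (∀ i, M i i = 0) ∧ IsUnit M}

instance (n : ℕ) : Finite (GoodU F n) := by
  unfold GoodU; infer_instance

noncomputable def stepFun (h2 : (2:F) = 0) (m : ℕ) :
    {v : Fin (2*m+1) → F // v ≠ 0} × (Fin (2*m) → F) × GoodU F (2*m) → GoodU F (2*m+2) :=
  fun x => ⟨stepMat m x.1.1 x.2.1 x.2.2.1,
    stepMat_isSymm _ _ x.2.2.2.1,
    stepMat_diag h2 _ _ x.2.2.2.2.1,
    stepMat_isUnit _ x.1.2 x.2.2.2.2.2⟩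

lemma stepFun_injective (h2 : (2:F) = 0) (m : ℕ) : Function.Injective (stepFun F h2 m) := by
  rintro ⟨⟨v,hv⟩,w,⟨B,hB1,hB2,hB3⟩⟩ ⟨⟨v',hv'⟩,w',⟨B',hB1',hB2',hB3'⟩⟩ h
  have hM : stepMat m v w B = stepMat m v' w' B' := congrArg Subtype.val h
  have hvv : v = v' := funext fun j => by
    rw [← stepMat_row_last w B hv j, ← stepMat_row_last w' B' hv' j, hM]
  subst hvv
  have hww : w = w' := funext fun i => by
    rw [← stepMat_row_k w B hv i, ← stepMat_row_k w' B' hv i, hM]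
  subst hww
  have hBB : B = B' := by
    ext i j
    have h1 : B i j + (Pmat m v w * Jmat (v (piv v)) * (Pmat m v w)ᵀ) i j
        = B' i j + (Pmat m v w * Jmat (v (piv v)) * (Pmat m v w)ᵀ) i j := by
      rw [← stepMat_block v w B i j, ← stepMat_block v w B' i j, hM]
    exact add_right_cancel h1
  subst hBB
  rfl

lemma evenCount (h2 : (2:F) = 0) (m : ℕ) :
    ∏ j ∈ Finset.Icc 1 m,
      ((Fintype.card F ^ (2*j-1) - 1) * Fintype.card F ^ (2*j-2))
      ≤ Nat.card (GoodU F (2*m)) := by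
  induction m with
  | zero =>
    have : Nonempty (GoodU F 0) :=
      ⟨⟨1, Matrix.isSymm_one, fun i => i.elim0, isUnit_one⟩⟩
    simpa [Nat.one_le_iff_ne_zero] using (Nat.card_pos (α := GoodU F 0)).ne'
  | succ m ih =>
    classical
    have key := Nat.card_le_card_of_injective _ (stepFun_injective F h2 m)
    have hcard : Nat.card ({v : Fin (2*m+1) → F // v ≠ 0} × (Fin (2*m) → F) × GoodU F (2*m))
        = (Fintype.card F ^ (2*m+1) - 1) * (Fintype.card F ^ (2*m) * Nat.card (GoodU F (2*m))) := by
      rw [Nat.card_prod, Nat.card_prod]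
      congr 1
      · rw [Nat.card_eq_fintype_card]
        have : Fintype.card {v : Fin (2*m+1) → F // ¬ (v = 0)} =
            Fintype.card (Fin (2*m+1) → F) - Fintype.card {v : Fin (2*m+1) → F // v = 0} :=
          Fintype.card_subtype_compl _
        rw [this, Fintype.card_subtype_eq, Fintype.card_fun]
        simp
      · congr 1
        rw [Nat.card_eq_fintype_card, Fintype.card_fun]
        simp
    rw [hcard] at key
    have harith : ∀ j ∈ Finset.Icc 1 (m+1), True := fun _ _ => trivial
    rw [Finset.prod_Icc_succ_top (Nat.succ_le_succ (Nat.zero_le m))]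
    have h1 : 2*(m+1)-1 = 2*m+1 := by omega
    have h2' : 2*(m+1)-2 = 2*m := by omega
    rw [h1, h2']
    calc (∏ j ∈ Finset.Icc 1 m, ((Fintype.card F ^ (2*j-1) - 1) * Fintype.card F ^ (2*j-2)))
          * ((Fintype.card F ^ (2*m+1) - 1) * Fintype.card F ^ (2*m))
        ≤ Nat.card (GoodU F (2*m)) * ((Fintype.card F ^ (2*m+1) - 1) * Fintype.card F ^ (2*m)) :=
          Nat.mul_le_mul_right _ ih
      _ = (Fintype.card F ^ (2*m+1) - 1) * (Fintype.card F ^ (2*m) * Nat.card (GoodU F (2*m))) := by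
          ring
      _ ≤ Nat.card (GoodU F (2*m+2)) := key

end Count

section ZModTwo
variable (F : Type) [Field F] [Fintype F] [Algebra (ZMod 2) F]

lemma charTwoF : (2:F) = 0 := by
  have : algebraMap (ZMod 2) F 2 = 2 := map_ofNat _ 2
  rw [← this, show (2 : ZMod 2) = 0 by decide, map_zero]

lemma algInjF : Function.Injective fun r : ZMod 2 => r • (1:F) := by
  intro r s h
  exact smul_left_injective (ZMod 2) (one_ne_zero (α := F)) h

lemma isUnit_rows_zmod2 {n : ℕ} {M : Matrix (Fin n) (Fin n) F} (h : IsUnit M) :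
    LinearIndependent (ZMod 2) (fun i => M i) := by
  have hF : LinearIndependent F (fun i => M i) := Matrix.linearIndependent_rows_iff_isUnit.mpr h
  exact hF.restrict_scalars (algInjF F)

def GoodL (n : ℕ) : Type :=
  {M : Matrix (Fin n) (Fin n) F // M.IsSymm ∧ (∀ i, M i i = 0) ∧
    LinearIndependent (ZMod 2) (fun i => M i)}

instance (n : ℕ) : Finite (GoodL F n) := by
  unfold GoodL; infer_instance

lemma goodU_le_goodL (n : ℕ) : Nat.card (GoodU F n) ≤ Nat.card (GoodL F n) := by
  apply Nat.card_le_card_of_injective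
    (fun x : GoodU F n => (⟨x.1, x.2.1, x.2.2.1, isUnit_rows_zmod2 F x.2.2.2⟩ : GoodL F n))
  intro x y h
  exact Subtype.ext (congrArg (fun z : GoodL F n => z.1) h)

end ZModTwo

section Odd
variable (F : Type) [Field F] [Fintype F] [Algebra (ZMod 2) F]

def oddMat (n : ℕ) (B : Matrix (Fin n) (Fin n) F) (b : Fin n → F) :
    Matrix (Fin (n+1)) (Fin (n+1)) F :=
  Matrix.of (Fin.snoc (fun i => Fin.snoc (B i) (b i)) (Fin.snoc b 0))

variable {F}

lemma oddMat_cc {n : ℕ} (B : Matrix (Fin n) (Fin n) F) (b : Fin n → F) (i j : Fin n) :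
    oddMat F n B b i.castSucc j.castSucc = B i j := by
  simp [oddMat]

lemma oddMat_cl {n : ℕ} (B : Matrix (Fin n) (Fin n) F) (b : Fin n → F) (i : Fin n) :
    oddMat F n B b i.castSucc (Fin.last n) = b i := by
  simp [oddMat]

lemma oddMat_lc {n : ℕ} (B : Matrix (Fin n) (Fin n) F) (b : Fin n → F) (j : Fin n) :
    oddMat F n B b (Fin.last n) j.castSucc = b j := by
  simp [oddMat]

lemma oddMat_ll {n : ℕ} (B : Matrix (Fin n) (Fin n) F) (b : Fin n → F) :
    oddMat F n B b (Fin.last n) (Fin.last n) = 0 := by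
  simp [oddMat]

lemma oddMat_isSymm {n : ℕ} {B : Matrix (Fin n) (Fin n) F} (b : Fin n → F)
    (hB : B.IsSymm) : (oddMat F n B b).IsSymm := by
  apply Matrix.IsSymm.ext
  intro x y
  induction x using Fin.lastCases with
  | last =>
    induction y using Fin.lastCases with
    | last => rfl
    | cast j => rw [oddMat_cl, oddMat_lc]
  | cast i =>
    induction y using Fin.lastCases with
    | last => rw [oddMat_cl, oddMat_lc]
    | cast j => rw [oddMat_cc, oddMat_cc, hB.apply]

lemma oddMat_diag {n : ℕ} {B : Matrix (Fin n) (Fin n) F} (b : Fin n → F)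
    (hB : ∀ i, B i i = 0) : ∀ x, oddMat F n B b x x = 0 := by
  intro x
  induction x using Fin.lastCases with
  | last => exact oddMat_ll B b
  | cast i => rw [oddMat_cc]; exact hB i

lemma oddMat_linIndep {n : ℕ}
    {B : Matrix (Fin n) (Fin n) F} {b : Fin n → F} (hB : IsUnit B)
    (hb : b ∉ Set.range (fun c : Fin n → ZMod 2 => ∑ i, c i • B i)) :
    LinearIndependent (ZMod 2) (fun x => oddMat F n B b x) := by
  rw [Fintype.linearIndependent_iff]
  intro g hg
  set c : Fin n → ZMod 2 := fun i => g i.castSucc with hc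
  have e1 : ∀ j : Fin n, (∑ i, c i • B i j) + g (Fin.last n) • b j = 0 := by
    intro j
    have := congrFun hg j.castSucc
    rw [Finset.sum_apply] at this
    simp only [Pi.smul_apply] at this
    rw [Fin.sum_univ_castSucc] at this
    simp only [oddMat_cc, oddMat_lc] at this
    exact this
  have hone : ∀ a : ZMod 2, a = 0 ∨ a = 1 := by decide
  rcases hone (g (Fin.last n)) with h | h
  · have e2 : ∀ j, (∑ i, c i • B i j) = 0 := by
      intro j; have := e1 j; rw [h, zero_smul, add_zero] at this; exact this
    have e3 : (∑ i, c i • B i) = 0 := by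
      funext j
      rw [Finset.sum_apply]
      simpa using e2 j
    have hli := Fintype.linearIndependent_iff.mp (isUnit_rows_zmod2 F hB)
    have hc0 := hli c e3
    intro x
    induction x using Fin.lastCases with
    | last => exact h
    | cast i => exact hc0 i
  · exfalso
    apply hb
    refine ⟨c, ?_⟩
    funext j
    show (∑ i, c i • B i) j = b j
    rw [Finset.sum_apply]
    simp only [Pi.smul_apply]
    have := e1 j
    rw [h, one_smul] at this
    have hxx : ∀ x : F, x + x = 0 := fun x => by
      rw [← two_mul, charTwoF F, zero_mul]
    have h4 : -(b j) = ∑ i, c i • B i j := neg_eq_of_add_eq_zero_left this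
    have h5 : -(b j) = b j := neg_eq_of_add_eq_zero_left (hxx (b j))
    rw [← h4, h5]

end Odd

section OddCount
variable (F : Type) [Field F] [Fintype F] [Algebra (ZMod 2) F]

noncomputable def oddFun (n : ℕ) :
    (Σ B : GoodU F n, {b : Fin n → F //
        b ∉ Set.range (fun c : Fin n → ZMod 2 => ∑ i, c i • B.1 i)}) → GoodL F (n+1) :=
  fun x => ⟨oddMat F n x.1.1 x.2.1,
    oddMat_isSymm x.2.1 x.1.2.1,
    oddMat_diag x.2.1 x.1.2.2.1,
    oddMat_linIndep x.1.2.2.2 x.2.2⟩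

lemma oddFun_injective (n : ℕ) : Function.Injective (oddFun F n) := by
  rintro ⟨⟨B, hB⟩, ⟨b, hb⟩⟩ ⟨⟨B', hB'⟩, ⟨b', hb'⟩⟩ h
  have hM : oddMat F n B b = oddMat F n B' b' :=
    congrArg (fun z : GoodL F (n+1) => z.1) h
  have hBB : B = B' := by
    ext i j
    rw [← oddMat_cc B b i j, hM, oddMat_cc]
  subst hBB
  have hbb : b = b' := by
    funext j
    rw [← oddMat_lc B b j, hM, oddMat_lc]
  subst hbb
  rfl

lemma fiber_bound (n : ℕ) (B : Matrix (Fin n) (Fin n) F) :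
    Fintype.card F ^ n - 2 ^ n ≤
      Nat.card {b : Fin n → F //
        b ∉ Set.range (fun c : Fin n → ZMod 2 => ∑ i, c i • B i)} := by
  classical
  set T : Set (Fin n → F) := Set.range (fun c : Fin n → ZMod 2 => ∑ i, c i • B i) with hT
  have h1 : Fintype.card {b : Fin n → F // ¬ b ∈ T} =
      Fintype.card (Fin n → F) - Fintype.card {b : Fin n → F // b ∈ T} :=
    Fintype.card_subtype_compl _
  have h2 : Fintype.card {b : Fin n → F // b ∈ T} ≤ 2 ^ n := by
    have := Fintype.card_range_le (fun c : Fin n → ZMod 2 => ∑ i, c i • B i)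
    calc Fintype.card {b : Fin n → F // b ∈ T}
        = Fintype.card T := Fintype.card_congr (Equiv.refl _)
      _ ≤ Fintype.card (Fin n → ZMod 2) := this
      _ = 2 ^ n := by rw [Fintype.card_fun]; simp [ZMod]
  have h3 : Fintype.card (Fin n → F) = Fintype.card F ^ n := by
    rw [Fintype.card_fun]; simp
  rw [Nat.card_eq_fintype_card]
  calc Fintype.card F ^ n - 2 ^ n
      ≤ Fintype.card (Fin n → F) - Fintype.card {b : Fin n → F // b ∈ T} := by omega
    _ = Fintype.card {b : Fin n → F // ¬ b ∈ T} := h1.symm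
  
lemma oddCount (m : ℕ) :
    (Fintype.card F ^ (2*m) - 2 ^ (2*m)) *
      ∏ j ∈ Finset.Icc 1 m,
        ((Fintype.card F ^ (2*j-1) - 1) * Fintype.card F ^ (2*j-2))
      ≤ Nat.card (GoodL F (2*m+1)) := by
  classical
  letI : Fintype (GoodU F (2*m)) := Fintype.ofFinite _
  have key := Nat.card_le_card_of_injective _ (oddFun_injective F (2*m))
  have hsig : Nat.card (Σ B : GoodU F (2*m), {b : Fin (2*m) → F //
      b ∉ Set.range (fun c : Fin (2*m) → ZMod 2 => ∑ i, c i • B.1 i)}) =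
      ∑ B : GoodU F (2*m), Nat.card {b : Fin (2*m) → F //
        b ∉ Set.range (fun c : Fin (2*m) → ZMod 2 => ∑ i, c i • B.1 i)} := by
    rw [Nat.card_eq_fintype_card, Fintype.card_sigma]
    exact Finset.sum_congr rfl fun B _ => (Nat.card_eq_fintype_card).symm
  have hlow : Fintype.card (GoodU F (2*m)) * (Fintype.card F ^ (2*m) - 2 ^ (2*m)) ≤
      ∑ B : GoodU F (2*m), Nat.card {b : Fin (2*m) → F //
        b ∉ Set.range (fun c : Fin (2*m) → ZMod 2 => ∑ i, c i • B.1 i)} := by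
    have := Finset.card_nsmul_le_sum (Finset.univ : Finset (GoodU F (2*m)))
      (fun B => Nat.card {b : Fin (2*m) → F //
        b ∉ Set.range (fun c : Fin (2*m) → ZMod 2 => ∑ i, c i • B.1 i)})
      (Fintype.card F ^ (2*m) - 2 ^ (2*m))
      (fun B _ => fiber_bound F (2*m) B.1)
    simpa [smul_eq_mul, Finset.card_univ] using this
  calc (Fintype.card F ^ (2*m) - 2 ^ (2*m)) *
        ∏ j ∈ Finset.Icc 1 m, ((Fintype.card F ^ (2*j-1) - 1) * Fintype.card F ^ (2*j-2))
      ≤ (Fintype.card F ^ (2*m) - 2 ^ (2*m)) * Nat.card (GoodU F (2*m)) :=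
        Nat.mul_le_mul_left _ (evenCount F (charTwoF F) m)
    _ = Fintype.card (GoodU F (2*m)) * (Fintype.card F ^ (2*m) - 2 ^ (2*m)) := by
        rw [Nat.card_eq_fintype_card]; ring
    _ ≤ _ := le_trans (le_trans hlow (le_of_eq hsig.symm)) key

end OddCount

lemma realProd (q : ℝ) (hq : 0 < q) (m : ℕ) :
    q ^ (m*(2*m-1)) * ∏ j ∈ Finset.Icc 1 m, (1 - q ^ ((1:ℤ) - 2*(j:ℤ))) =
      ∏ j ∈ Finset.Icc 1 m, ((q ^ (2*j-1) - 1) * q ^ (2*j-2)) := by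
  have hq0 : q ≠ 0 := ne_of_gt hq
  induction m with
  | zero => simp
  | succ m ih =>
    rw [Finset.prod_Icc_succ_top (Nat.succ_le_succ (Nat.zero_le m)),
      Finset.prod_Icc_succ_top (Nat.succ_le_succ (Nat.zero_le m))]
    have hme : (m+1)*(2*(m+1)-1) = m*(2*m-1) + (4*m+1) := by
      cases m with
      | zero => rfl
      | succ k =>
        have e1 : 2*(k+1)-1 = 2*k+1 := by omega
        have e2 : 2*(k+1+1)-1 = 2*k+3 := by omega
        rw [e1, e2]; ring
    have hfac : q ^ (4*m+1) * (1 - q ^ ((1:ℤ) - 2*((m+1 : ℕ):ℤ))) =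
        (q ^ (2*(m+1)-1) - 1) * q ^ (2*(m+1)-2) := by
      have e1 : 2*(m+1)-1 = 2*m+1 := by omega
      have e2 : 2*(m+1)-2 = 2*m := by omega
      have e3 : (1:ℤ) - 2*((m+1 : ℕ):ℤ) = -((2*m+1 : ℕ) : ℤ) := by push_cast; ring
      rw [e1, e2, e3, _root_.zpow_neg, zpow_natCast]
      field_simp
      ring
    rw [hme, pow_add]
    calc q ^ (m*(2*m-1)) * q ^ (4*m+1) *
          ((∏ j ∈ Finset.Icc 1 m, (1 - q ^ ((1:ℤ) - 2*(j:ℤ)))) *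
            (1 - q ^ ((1:ℤ) - 2*((m+1 : ℕ):ℤ))))
        = (q ^ (m*(2*m-1)) * ∏ j ∈ Finset.Icc 1 m, (1 - q ^ ((1:ℤ) - 2*(j:ℤ)))) *
          (q ^ (4*m+1) * (1 - q ^ ((1:ℤ) - 2*((m+1 : ℕ):ℤ)))) := by ring
      _ = _ := by rw [ih, hfac]

lemma castProd (Q : ℕ) (hQ : 1 ≤ Q) (m : ℕ) :
    ((∏ j ∈ Finset.Icc 1 m, ((Q ^ (2*j-1) - 1) * Q ^ (2*j-2)) : ℕ) : ℝ) =
      ∏ j ∈ Finset.Icc 1 m, (((Q:ℝ) ^ (2*j-1) - 1) * (Q:ℝ) ^ (2*j-2)) := by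
  rw [Nat.cast_prod]
  refine Finset.prod_congr rfl fun j _ => ?_
  rw [Nat.cast_mul, Nat.cast_sub (Nat.one_le_pow _ _ hQ), Nat.cast_pow, Nat.cast_one,
    Nat.cast_pow]

theorem stmt9 (d n : ℕ) (hd : 1 ≤ d) (hn : 2 ≤ n)
    (F : Type) [Field F] [Fintype F] [Algebra (ZMod 2) F]
    (hF : Fintype.card F = 2 ^ d) :
    (Even n →
      ((2 : ℝ) ^ d) ^ (n * (n - 1) / 2)
          * ∏ j ∈ Finset.Icc 1 (n / 2), (1 - ((2 : ℝ) ^ d) ^ ((1 : ℤ) - 2 * (j : ℤ)))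
        ≤ (Nat.card {M : Matrix (Fin n) (Fin n) F //
            M.IsSymm ∧ (∀ i, M i i = 0) ∧
            LinearIndependent (ZMod 2) (fun i => M i)} : ℝ)) ∧
    (Odd n →
      (((2 : ℝ) ^ (d * (n - 1)) - 2 ^ (n - 1))
          * ((2 : ℝ) ^ d) ^ ((n - 1) * (n - 2) / 2)
          * ∏ j ∈ Finset.Icc 1 ((n - 1) / 2), (1 - ((2 : ℝ) ^ d) ^ ((1 : ℤ) - 2 * (j : ℤ))))
        ≤ (Nat.card {M : Matrix (Fin n) (Fin n) F //
            M.IsSymm ∧ (∀ i, M i i = 0) ∧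
            LinearIndependent (ZMod 2) (fun i => M i)} : ℝ)) := by
  have hQ1 : 1 ≤ Fintype.card F := Fintype.card_pos
  have hQ2 : 2 ≤ Fintype.card F := by
    rw [hF]
    calc 2 = 2^1 := rfl
      _ ≤ 2^d := Nat.pow_le_pow_right (by norm_num) hd
  have hQR : ((Fintype.card F : ℝ)) = (2:ℝ)^d := by rw [hF]; push_cast; ring
  have hQpos : (0:ℝ) < (Fintype.card F : ℝ) := by positivity
  constructor
  · intro hev
    obtain ⟨r, hr⟩ := hev
    have hn2 : n = 2*r := by omega
    subst hn2
    have he : 2*r*(2*r-1)/2 = r*(2*r-1) := by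
      rw [mul_assoc]; exact Nat.mul_div_cancel_left _ (by norm_num)
    have hd2 : 2*r/2 = r := by omega
    rw [he, hd2, ← hQR]
    calc ((Fintype.card F : ℝ)) ^ (r*(2*r-1))
          * ∏ j ∈ Finset.Icc 1 r, (1 - ((Fintype.card F : ℝ)) ^ ((1 : ℤ) - 2 * (j : ℤ)))
        = ∏ j ∈ Finset.Icc 1 r,
            (((Fintype.card F : ℝ)) ^ (2*j-1) - 1) * ((Fintype.card F : ℝ)) ^ (2*j-2) :=
          realProd _ hQpos r
      _ = ((∏ j ∈ Finset.Icc 1 r,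
            ((Fintype.card F ^ (2*j-1) - 1) * Fintype.card F ^ (2*j-2)) : ℕ) : ℝ) :=
          (castProd _ hQ1 r).symm
      _ ≤ ((Nat.card (GoodU F (2*r)) : ℕ) : ℝ) :=
          Nat.cast_le.mpr (evenCount F (charTwoF F) r)
      _ ≤ ((Nat.card (GoodL F (2*r)) : ℕ) : ℝ) := Nat.cast_le.mpr (goodU_le_goodL F (2*r))
      _ = (Nat.card {M : Matrix (Fin (2*r)) (Fin (2*r)) F //
            M.IsSymm ∧ (∀ i, M i i = 0) ∧
            LinearIndependent (ZMod 2) (fun i => M i)} : ℝ) := rfl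
  · intro hodd
    obtain ⟨r, hr⟩ := hodd
    have hn2 : n = 2*r+1 := by omega
    subst hn2
    have e1 : 2*r+1-1 = 2*r := by omega
    have e2 : (2*r+1-1)*(2*r+1-2)/2 = r*(2*r-1) := by
      rw [show 2*r+1-1 = 2*r from by omega, show 2*r+1-2 = 2*r-1 from by omega,
        mul_assoc]
      exact Nat.mul_div_cancel_left _ (by norm_num)
    have e3 : (2*r+1-1)/2 = r := by omega
    rw [e2, e3, e1, ← hQR]
    have hcast : ((2:ℝ)^(d*(2*r)) - 2^(2*r)) =
        ((Fintype.card F ^ (2*r) - 2^(2*r) : ℕ) : ℝ) := by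
      rw [Nat.cast_sub (Nat.pow_le_pow_left hQ2 _), Nat.cast_pow, hF]
      push_cast
      rw [← pow_mul]
    rw [hcast, mul_assoc]
    calc ((Fintype.card F ^ (2*r) - 2^(2*r) : ℕ) : ℝ) *
          (((Fintype.card F : ℝ)) ^ (r*(2*r-1))
            * ∏ j ∈ Finset.Icc 1 r, (1 - ((Fintype.card F : ℝ)) ^ ((1 : ℤ) - 2 * (j : ℤ))))
        = ((Fintype.card F ^ (2*r) - 2^(2*r) : ℕ) : ℝ) *
            ((∏ j ∈ Finset.Icc 1 r,
              ((Fintype.card F ^ (2*j-1) - 1) * Fintype.card F ^ (2*j-2)) : ℕ) : ℝ) := by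
          rw [realProd _ hQpos r, castProd _ hQ1 r]
      _ = (((Fintype.card F ^ (2*r) - 2^(2*r)) *
            ∏ j ∈ Finset.Icc 1 r,
              ((Fintype.card F ^ (2*j-1) - 1) * Fintype.card F ^ (2*j-2)) : ℕ) : ℝ) := by
          rw [Nat.cast_mul]
      _ ≤ ((Nat.card (GoodL F (2*r+1)) : ℕ) : ℝ) := Nat.cast_le.mpr (oddCount F r)
      _ = (Nat.card {M : Matrix (Fin (2*r+1)) (Fin (2*r+1)) F //
            M.IsSymm ∧ (∀ i, M i i = 0) ∧
            LinearIndependent (ZMod 2) (fun i => M i)} : ℝ) := rfl
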